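/- Consider the spiked tensor model and a sequence of critical points satisfying Assumption A(r) and Assumption B (with s = r). Then, almost surely, the normalized squared error H_N = ‖T − Σ_{i=1}^r γ̂_i v̂_i^{⊗d}‖_F² − (1/N)·‖X‖_F² converges, as N → ∞, to βᵀ·R_uu^{⊙d}·β − γᵀ·R_vv^{⊙d}·γ, where β = (β_1,…,β_r), γ = (γ_1,…,γ_r), and R^{⊙d} denotes the entrywise d-th power of the matrix R. -/

import Mathlib

open Matrix BigOperators Filter Topology MeasureTheory
open scoped ENNReal NNReal

noncomputable section

/-- An order-`D` tensor of dimension `N`. -/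
abbrev Tensor (D N : ℕ) := (Fin D → Fin N) → ℝ

/-- A tensor is symmetric if it is invariant under every permutation of its indices. -/
def IsSymTensor {D N : ℕ} (T : Tensor D N) : Prop :=
  ∀ (π : Equiv.Perm (Fin D)) (i : Fin D → Fin N), T (i ∘ π) = T i

/-- `w^{⊗D}`, the rank-one tensor with entries `w_{i_1} ⋯ w_{i_D}`. -/
def tpow {D N : ℕ} (w : Fin N → ℝ) : Tensor D N := fun i => ∏ k, w (i k)

/-- `⟨T, v^{⊗ m}⟩ ∈ ℝ^N` for an order-`(m+1)` tensor `T`: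
the `j`-th entry is `Σ_{i_1,…,i_m} T_{i_1 … i_m j} v_{i_1} ⋯ v_{i_m}`. -/
def contractVec {m N : ℕ} (T : Tensor (m + 1) N) (v : Fin N → ℝ) : Fin N → ℝ :=
  fun j => ∑ f : Fin m → Fin N, T (Fin.snoc f j) * ∏ k, v (f k)

/-- `⟨T, v^{⊗ m}⟩`, an `N × N` matrix, for an order-`(m+2)` tensor `T`:
the `(i,j)` entry is `Σ_{i_1,…,i_m} T_{i_1 … i_m i j} v_{i_1} ⋯ v_{i_m}`. -/
def contractMat {m N : ℕ} (T : Tensor (m + 2) N) (v : Fin N → ℝ) :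
    Matrix (Fin N) (Fin N) ℝ :=
  Matrix.of fun i j => ∑ f : Fin m → Fin N, T (Fin.snoc (Fin.snoc f i) j) * ∏ k, v (f k)

/-- `⟨T, v^{⊗ D}⟩ ∈ ℝ` (full contraction). -/
def contractAll {D N : ℕ} (T : Tensor D N) (v : Fin N → ℝ) : ℝ :=
  ∑ f, T f * tpow v f

/-- Squared Frobenius norm of a tensor. -/
def frobSq {D N : ℕ} (T : Tensor D N) : ℝ := ∑ f, (T f) ^ 2

/-- Entrywise (Hadamard) `k`-th power of a matrix. -/
def entryPow {m n : Type} (M : Matrix m n ℝ) (k : ℕ) : Matrix m n ℝ :=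
  Matrix.of fun i j => (M i j) ^ k

/-- Gram matrix `(⟨v_i, v_j⟩)_{ij}`. -/
def gram {r N : ℕ} (v : Fin r → Fin N → ℝ) : Matrix (Fin r) (Fin r) ℝ :=
  Matrix.of fun i j => v i ⬝ᵥ v j

/-- `flatMat W A = (W ⊗ Id_N) · BlockDiag(A_1, …, A_r)`. -/
def flatMat {r N : ℕ} (W : Matrix (Fin r) (Fin r) ℝ) (A : Fin r → Matrix (Fin N) (Fin N) ℝ) :
    Matrix (Fin r × Fin N) (Fin r × Fin N) ℝ :=
  (Matrix.kroneckerMap (· * ·) W (1 : Matrix (Fin N) (Fin N) ℝ)) *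
    ((Matrix.blockDiagonal A).reindex (Equiv.prodComm (Fin N) (Fin r))
      (Equiv.prodComm (Fin N) (Fin r)))

/-- `Ŵ = (R^{⊙ k})⁻¹ · diag(γ_r/γ_1, …, γ_r/γ_r)` where `R` is the Gram matrix of `v`. -/
def What {r N : ℕ} (k : ℕ) (γ : Fin (r + 1) → ℝ) (v : Fin (r + 1) → Fin N → ℝ) :
    Matrix (Fin (r + 1)) (Fin (r + 1)) ℝ :=
  (entryPow (gram v) k)⁻¹ * Matrix.diagonal (fun i => γ (Fin.last r) / γ i)

/-- Symmetrization of a noise tensor: `X_{i_1…i_D} = (1/D!) Σ_{π} W_{i_{π(1)}…i_{π(D)}}`. -/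
def symNoise {D N : ℕ} (W : Tensor D N) : Tensor D N :=
  fun i => (1 / (Nat.factorial D : ℝ)) * ∑ π : Equiv.Perm (Fin D), W (i ∘ π)

/-- The spiked tensor `T = Σ_j β_j u_j^{⊗ D} + N^{-1/2} X` (here the dimension is `N`). -/
def spikedT {D r N : ℕ} (β : Fin r → ℝ) (u : Fin r → Fin N → ℝ) (X : Tensor D N) :
    Tensor D N :=
  fun f => (∑ j, β j * tpow (u j) f) + (1 / Real.sqrt N) * X f

/-- The holomorphic square root of `z² − κ²` on `ℂ ∖ [−|κ|,|κ|]` asymptotic to `z`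
at infinity, realized as `(z−|κ|)^{1/2} (z+|κ|)^{1/2}` with principal branches. -/
def sqrtBr (κ : ℝ) (z : ℂ) : ℂ :=
  (z - (|κ| : ℝ)) ^ ((1 : ℂ) / 2) * (z + (|κ| : ℝ)) ^ ((1 : ℂ) / 2)

/-- `ζ_κ(z) = (2/κ²)(−z + √(z²−κ²))` for `κ ≠ 0`, and `ζ_0(z) = −1/z`. -/
def zetaC (κ : ℝ) (z : ℂ) : ℂ :=
  if κ = 0 then -z⁻¹ else (2 / (κ : ℂ) ^ 2) * (-z + sqrtBr κ z)

/-- The semicircle-type measure `μ_κ`: density `(2/(πκ²))·√((κ²−x²)_+)` for `κ ≠ 0`,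
and `δ_0` for `κ = 0`. -/
def semicirc (κ : ℝ) : Measure ℝ :=
  if κ = 0 then Measure.dirac 0
  else MeasureTheory.volume.withDensity fun x =>
    ENNReal.ofReal ((2 / (Real.pi * κ ^ 2)) * Real.sqrt (max (κ ^ 2 - x ^ 2) 0))

/-- Empirical spectral measure of a real square matrix: the uniform measure on (the real
parts of) the roots of its characteristic polynomial over `ℂ`, with multiplicity. -/
def empSpec {n : Type} [Fintype n] [DecidableEq n] (A : Matrix n n ℝ) : Measure ℝ :=
  ((Fintype.card n : ℝ≥0∞))⁻¹ •
    (Multiset.map (fun z => Measure.dirac z.re) ((A.map Complex.ofReal).charpoly.roots)).sum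

/-- The resolvent `(A − z·Id)⁻¹` of a real matrix, as a complex matrix. -/
def resolv {n : Type} [Fintype n] [DecidableEq n] (A : Matrix n n ℝ) (z : ℂ) :
    Matrix n n ℂ :=
  (A.map Complex.ofReal - z • 1)⁻¹

lemma sum_tpow_mul_tpow {D N : ℕ} (w v : Fin N → ℝ) :
    ∑ f : Fin D → Fin N, tpow w f * tpow v f = (w ⬝ᵥ v) ^ D := by
  have h : ((w ⬝ᵥ v) ^ D) = ∏ _k : Fin D, ∑ j, w j * v j := by
    simp [dotProduct, Finset.prod_const]
  rw [h, Finset.prod_univ_sum]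
  simp [tpow, Finset.prod_mul_distrib]

lemma sum_symNoise_mul_tpow {D N : ℕ} (W : Tensor D N) (v : Fin N → ℝ) :
    ∑ f, symNoise W f * tpow v f = ∑ f, W f * tpow v f := by
  have h1 : ∀ π : Equiv.Perm (Fin D),
      ∑ f : Fin D → Fin N, W (f ∘ π) * tpow v f = ∑ f, W f * tpow v f := by
    intro π
    refine Fintype.sum_equiv (Equiv.arrowCongr π.symm (Equiv.refl (Fin N))) _ _ (fun f => ?_)
    have h3 : (Equiv.arrowCongr π.symm (Equiv.refl (Fin N))) f = f ∘ π := by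
      funext x; simp [Equiv.arrowCongr]
    have h4 : tpow v (f ∘ π) = tpow v f := by
      simpa [tpow, Function.comp] using Equiv.prod_comp π (fun k => v (f k))
    rw [h3, h4]
  simp only [symNoise]
  have h2 : ∀ f : Fin D → Fin N,
      ((1 / (Nat.factorial D : ℝ)) * ∑ π : Equiv.Perm (Fin D), W (f ∘ π)) * tpow v f
      = (1 / (Nat.factorial D : ℝ)) * ∑ π : Equiv.Perm (Fin D), W (f ∘ π) * tpow v f := by
    intro f; rw [mul_assoc, Finset.sum_mul]
  simp only [h2]
  rw [← Finset.mul_sum, Finset.sum_comm]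
  simp only [h1]
  rw [Finset.sum_const, Finset.card_univ, Fintype.card_perm, Fintype.card_fin, nsmul_eq_mul]
  have : (Nat.factorial D : ℝ) ≠ 0 := Nat.cast_ne_zero.mpr (Nat.factorial_ne_zero D)
  field_simp


lemma sum_pi_succ {m N : ℕ} (F : (Fin (m + 1) → Fin N) → ℝ) :
    ∑ g : Fin (m + 1) → Fin N, F g = ∑ f : Fin m → Fin N, ∑ j : Fin N, F (Fin.snoc f j) := by
  rw [← Equiv.sum_comp (Fin.snocEquiv (fun _ => Fin N)) F, Fintype.sum_prod_type,
    Finset.sum_comm]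
  rfl

lemma sum_mul_tpow_snoc {m N : ℕ} (T : Tensor (m + 1) N) (v : Fin N → ℝ) :
    ∑ f, T f * tpow v f = ∑ j, v j * contractVec T v j := by
  rw [sum_pi_succ (fun g => T g * tpow v g)]
  rw [Finset.sum_comm]
  refine Finset.sum_congr rfl fun j _ => ?_
  rw [contractVec, Finset.mul_sum]
  refine Finset.sum_congr rfl fun f _ => ?_
  have : tpow (D := m + 1) v (Fin.snoc f j) = (∏ k, v (f k)) * v j := by
    rw [tpow, Fin.prod_univ_castSucc]
    simp [Fin.snoc_castSucc, Fin.snoc_last]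
  rw [this]; ring

lemma ip_one {α ι : Type} [Fintype α] [Fintype ι] (a : ι → ℝ) (P : ι → α → ℝ) (X : α → ℝ) :
    ∑ f : α, (∑ i, a i * P i f) * X f = ∑ i, a i * ∑ f : α, X f * P i f := by
  simp only [Finset.sum_mul]
  rw [Finset.sum_comm]
  refine Finset.sum_congr rfl fun i _ => ?_
  rw [Finset.mul_sum]
  exact Finset.sum_congr rfl fun f _ => by ring

lemma ip_single {D n ι : ℕ} (a : Fin ι → ℝ) (P : Fin ι → Fin n → ℝ) (q : Fin n → ℝ) :
    ∑ f : Fin D → Fin n, (∑ j, a j * tpow (P j) f) * tpow q f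
      = ∑ j, a j * (P j ⬝ᵥ q) ^ D := by
  rw [ip_one a (fun j => tpow (P j)) (tpow q)]
  refine Finset.sum_congr rfl fun j _ => ?_
  rw [sum_tpow_mul_tpow, dotProduct_comm]

lemma ip_double {D n ι κ : ℕ} (a : Fin ι → ℝ) (b : Fin κ → ℝ)
    (P : Fin ι → Fin n → ℝ) (Q : Fin κ → Fin n → ℝ) :
    ∑ f : Fin D → Fin n, (∑ i, a i * tpow (P i) f) * (∑ j, b j * tpow (Q j) f)
      = ∑ i, ∑ j, a i * b j * (P i ⬝ᵥ Q j) ^ D := by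
  rw [ip_one a (fun i => tpow (P i)) (fun f => ∑ j, b j * tpow (Q j) f)]
  refine Finset.sum_congr rfl fun i _ => ?_
  rw [ip_single b Q (P i), Finset.mul_sum]
  refine Finset.sum_congr rfl fun j _ => ?_
  rw [dotProduct_comm (Q j)]
  ring

lemma key_identity {d r N : ℕ} (β γh : Fin (r + 1) → ℝ)
    (u v : Fin (r + 1) → Fin (N + 1) → ℝ) (X : Tensor (d + 3) (N + 1))
    (hcrit : ∀ i, contractVec (m := d + 2)
        (fun f => spikedT β u X f - ∑ j, γh j * tpow (v j) f) (v i) = 0) :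
    frobSq (fun f => spikedT β u X f - ∑ i, γh i * tpow (v i) f)
        - (1 / ((N : ℝ) + 1)) * frobSq X
      = ((∑ i, ∑ j, β i * β j * (u i ⬝ᵥ u j) ^ (d + 3))
        - ∑ i, ∑ j, γh i * γh j * (v i ⬝ᵥ v j) ^ (d + 3))
        + ∑ i, 2 * β i * ((1 / Real.sqrt ((N : ℝ) + 1)) * ∑ f, X f * tpow (u i) f) := by
  have hc : (0:ℝ) < Real.sqrt ((N : ℝ) + 1) := Real.sqrt_pos.mpr (by positivity)
  set c : ℝ := 1 / Real.sqrt ((N : ℝ) + 1) with hcdef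
  have hcc : c * c = 1 / ((N : ℝ) + 1) := by
    rw [hcdef, div_mul_div_comm, one_mul, Real.mul_self_sqrt (by positivity)]
  have hS : ∀ f, spikedT β u X f - ∑ i, γh i * tpow (v i) f
      = ((∑ j, β j * tpow (u j) f) - ∑ j, γh j * tpow (v j) f) + c * X f := by
    intro f
    simp only [spikedT, hcdef]
    push_cast
    ring
  -- criticality consequence
  have hA : ∀ i, ∑ f, (spikedT β u X f - ∑ j, γh j * tpow (v j) f) * tpow (v i) f = 0 := by
    intro i
    rw [sum_mul_tpow_snoc (m := d + 2) _ (v i)]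
    rw [hcrit i]
    simp
  have hAi : ∀ i, (∑ j, β j * (u j ⬝ᵥ v i) ^ (d + 3))
      - (∑ j, γh j * (v j ⬝ᵥ v i) ^ (d + 3))
      + c * (∑ f, X f * tpow (v i) f) = 0 := by
    intro i
    have h0 := hA i
    have hpt2 : ∀ f : Fin (d + 3) → Fin (N + 1),
        (spikedT β u X f - ∑ j, γh j * tpow (v j) f) * tpow (v i) f
        = (∑ j, β j * tpow (u j) f) * tpow (v i) f
          - (∑ j, γh j * tpow (v j) f) * tpow (v i) f
          + c * (X f * tpow (v i) f) := by
      intro f; rw [hS f]; ring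
    rw [Finset.sum_congr rfl (fun f _ => hpt2 f)] at h0
    rw [Finset.sum_add_distrib, Finset.sum_sub_distrib, ← Finset.mul_sum,
      ip_single β u (v i), ip_single γh v (v i)] at h0
    exact h0
  have hfs : frobSq (fun f => spikedT β u X f - ∑ i, γh i * tpow (v i) f)
      = (∑ f : Fin (d + 3) → Fin (N + 1), (∑ j, β j * tpow (u j) f) * (∑ j, β j * tpow (u j) f))
        - 2 * (∑ f : Fin (d + 3) → Fin (N + 1), (∑ j, β j * tpow (u j) f) * (∑ j, γh j * tpow (v j) f))
        + (∑ f : Fin (d + 3) → Fin (N + 1), (∑ j, γh j * tpow (v j) f) * (∑ j, γh j * tpow (v j) f))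
        + (2 * c) * ((∑ f : Fin (d + 3) → Fin (N + 1), (∑ j, β j * tpow (u j) f) * X f)
            - ∑ f : Fin (d + 3) → Fin (N + 1), (∑ j, γh j * tpow (v j) f) * X f)
        + (c * c) * frobSq X := by
    rw [frobSq, frobSq]
    have hpt : ∀ f : Fin (d + 3) → Fin (N + 1),
        (spikedT β u X f - ∑ i, γh i * tpow (v i) f) ^ 2
        = (∑ j, β j * tpow (u j) f) * (∑ j, β j * tpow (u j) f)
          - 2 * ((∑ j, β j * tpow (u j) f) * (∑ j, γh j * tpow (v j) f))
          + (∑ j, γh j * tpow (v j) f) * (∑ j, γh j * tpow (v j) f)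
          + (2 * c) * ((∑ j, β j * tpow (u j) f) * X f
              - (∑ j, γh j * tpow (v j) f) * X f)
          + (c * c) * (X f) ^ 2 := by
      intro f; rw [hS f]; ring
    simp only [hpt, Finset.sum_add_distrib, Finset.sum_sub_distrib, ← Finset.mul_sum]
  rw [hfs, ip_double β β u u, ip_double β γh u v, ip_double γh γh v v,
    ip_one β (fun i => tpow (u i)) X, ip_one γh (fun i => tpow (v i)) X]
  have hGv : c * (∑ i, γh i * ∑ f, X f * tpow (v i) f)
      = (∑ i, ∑ j, γh i * γh j * (v j ⬝ᵥ v i) ^ (d + 3))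
        - ∑ i, ∑ j, γh i * β j * (u j ⬝ᵥ v i) ^ (d + 3) := by
    rw [Finset.mul_sum, ← Finset.sum_sub_distrib]
    refine Finset.sum_congr rfl fun i _ => ?_
    have e1 : ∑ j, γh i * γh j * (v j ⬝ᵥ v i) ^ (d + 3)
        = γh i * ∑ j, γh j * (v j ⬝ᵥ v i) ^ (d + 3) := by
      rw [Finset.mul_sum]; exact Finset.sum_congr rfl fun j _ => by ring
    have e2 : ∑ j, γh i * β j * (u j ⬝ᵥ v i) ^ (d + 3)
        = γh i * ∑ j, β j * (u j ⬝ᵥ v i) ^ (d + 3) := by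
      rw [Finset.mul_sum]; exact Finset.sum_congr rfl fun j _ => by ring
    rw [e1, e2]
    linear_combination (γh i) * hAi i
  have hBsymm : ∑ i, ∑ j, γh i * γh j * (v j ⬝ᵥ v i) ^ (d + 3)
      = ∑ i, ∑ j, γh i * γh j * (v i ⬝ᵥ v j) ^ (d + 3) := by
    rw [Finset.sum_comm]
    exact Finset.sum_congr rfl fun i _ => Finset.sum_congr rfl fun j _ => by ring
  have hCsymm : ∑ i, ∑ j, γh i * β j * (u j ⬝ᵥ v i) ^ (d + 3)
      = ∑ i, ∑ j, β i * γh j * (u i ⬝ᵥ v j) ^ (d + 3) := by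
    rw [Finset.sum_comm]
    exact Finset.sum_congr rfl fun i _ => Finset.sum_congr rfl fun j _ => by ring
  have hGu : ∑ i, 2 * β i * (c * ∑ f, X f * tpow (u i) f)
      = (2 * c) * ∑ i, β i * ∑ f, X f * tpow (u i) f := by
    rw [Finset.mul_sum]
    exact Finset.sum_congr rfl fun i _ => by ring
  linear_combination (-2 : ℝ) * hGv + (-2 : ℝ) * hBsymm + 2 * hCsymm
    + (frobSq X) * hcc - hGu


open ProbabilityTheory Real
open scoped ENNReal NNReal

noncomputable section

lemma gauss_pt (c x : ℝ) :
    gaussianPDFReal 0 1 x * Real.exp (c * x)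
      = Real.exp (c ^ 2 / 2) * gaussianPDFReal c 1 x := by
  simp only [gaussianPDFReal, NNReal.coe_one, mul_one, sub_zero]
  rw [mul_assoc, ← Real.exp_add, mul_comm (Real.exp (c ^ 2 / 2)), mul_assoc, ← Real.exp_add]
  congr 1
  ring

lemma integrable_exp_gauss (c : ℝ) :
    Integrable (fun x => Real.exp (c * x)) (gaussianReal 0 1) := by
  rw [gaussianReal_of_var_ne_zero 0 one_ne_zero]
  have hd : (gaussianPDF 0 1) = fun x => ((Real.toNNReal (gaussianPDFReal 0 1 x) : ℝ≥0) : ℝ≥0∞) := by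
    funext x; rfl
  rw [hd, integrable_withDensity_iff_integrable_smul]
  · refine (Integrable.congr ((integrable_gaussianPDFReal c 1).const_mul (Real.exp (c ^ 2 / 2))) ?_)
    filter_upwards with x
    rw [NNReal.smul_def, smul_eq_mul, Real.coe_toNNReal _ (gaussianPDFReal_nonneg 0 1 x),
      gauss_pt]
  · exact (measurable_gaussianPDFReal 0 1).real_toNNReal

lemma integral_exp_gauss (c : ℝ) :
    ∫ x, Real.exp (c * x) ∂(gaussianReal 0 1) = Real.exp (c ^ 2 / 2) := by
  rw [gaussianReal_of_var_ne_zero 0 one_ne_zero]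
  have hd : (gaussianPDF 0 1) = fun x => ((Real.toNNReal (gaussianPDFReal 0 1 x) : ℝ≥0) : ℝ≥0∞) := by
    funext x; rfl
  rw [hd, integral_withDensity_eq_integral_smul ((measurable_gaussianPDFReal 0 1).real_toNNReal)]
  have : ∀ x, (Real.toNNReal (gaussianPDFReal 0 1 x)) • Real.exp (c * x)
      = Real.exp (c ^ 2 / 2) * gaussianPDFReal c 1 x := by
    intro x
    rw [NNReal.smul_def, smul_eq_mul, Real.coe_toNNReal _ (gaussianPDFReal_nonneg 0 1 x),
      gauss_pt]
  rw [integral_congr_ae (Filter.Eventually.of_forall this), integral_const_mul,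
    integral_gaussianPDFReal_eq_one c one_ne_zero, mul_one]

end

noncomputable section
lemma pi_mgf {ι : Type} [Fintype ι] (a : ι → ℝ) (c : ℝ) :
    Integrable (fun x : ι → ℝ => Real.exp (c * ∑ i, x i * a i))
        (Measure.pi fun _ => gaussianReal 0 1) ∧
    ∫ x : ι → ℝ, Real.exp (c * ∑ i, x i * a i) ∂(Measure.pi fun _ => gaussianReal 0 1)
      = Real.exp ((c ^ 2 * ∑ i, (a i) ^ 2) / 2) := by
  letI : MeasureSpace ℝ := ⟨gaussianReal 0 1⟩
  haveI : SigmaFinite (volume : Measure ℝ) :=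
    (inferInstance : SigmaFinite (gaussianReal 0 1))
  have hvol : (Measure.pi fun _ : ι => gaussianReal 0 1) = (volume : Measure (ι → ℝ)) :=
    (volume_pi).symm
  have hexp : ∀ x : ι → ℝ, Real.exp (c * ∑ i, x i * a i)
      = ∏ i, Real.exp ((c * a i) * x i) := by
    intro x
    rw [← Real.exp_sum]
    congr 1
    rw [Finset.mul_sum]
    exact Finset.sum_congr rfl fun i _ => by ring
  constructor
  · rw [hvol]
    simp only [hexp]
    exact Integrable.fintype_prod (f := fun i x => Real.exp ((c * a i) * x))
      (fun i => integrable_exp_gauss (c * a i))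
  · rw [hvol]
    simp only [hexp]
    rw [volume_pi, integral_fintype_prod_eq_prod (fun i x => Real.exp ((c * a i) * x))]
    have : ∀ i ∈ Finset.univ, ∫ x : ℝ, Real.exp ((c * a i) * x)
        = Real.exp ((c * a i) ^ 2 / 2) := fun i _ => integral_exp_gauss (c * a i)
    rw [Finset.prod_congr rfl this, ← Real.exp_sum]
    rw [← Finset.sum_div, Finset.mul_sum]
    have h5 : ∑ i, (c * a i) ^ 2 = ∑ i, c ^ 2 * a i ^ 2 :=
      Finset.sum_congr rfl fun i _ => by ring
    rw [h5]
end

noncomputable section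
lemma gauss_tail {ι : Type} [Fintype ι] (a : ι → ℝ) (ha : ∑ i, (a i) ^ 2 = 1)
    (t : ℝ) (ht : 0 ≤ t) :
    (Measure.pi fun _ : ι => gaussianReal 0 1) {x | t ≤ |∑ i, x i * a i|}
      ≤ ENNReal.ofReal (2 * Real.exp (-t ^ 2 / 2)) := by
  set μ := Measure.pi fun _ : ι => gaussianReal 0 1 with hμ
  haveI : IsProbabilityMeasure μ := by rw [hμ]; infer_instance
  set L : (ι → ℝ) → ℝ := fun x => ∑ i, x i * a i with hL
  have hmgf : ∀ c : ℝ, mgf L μ c = Real.exp (c ^ 2 / 2) := by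
    intro c
    rw [mgf, (pi_mgf a c).2, ha, mul_one]
  have hmgf' : ∀ c : ℝ, mgf (fun x => -L x) μ c = Real.exp (c ^ 2 / 2) := by
    intro c
    have : ∀ x : ι → ℝ, Real.exp (c * -L x) = Real.exp ((-c) * L x) := by
      intro x; ring_nf
    rw [mgf, integral_congr_ae (Filter.Eventually.of_forall this), ← mgf, hmgf]
    norm_num
  have hint : ∀ c : ℝ, Integrable (fun x => Real.exp (c * L x)) μ := fun c => (pi_mgf a c).1
  have hint' : ∀ c : ℝ, Integrable (fun x => Real.exp (c * -L x)) μ := by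
    intro c
    refine (hint (-c)).congr ?_
    filter_upwards with x
    ring_nf
  have h1 : μ {x | t ≤ L x} ≤ ENNReal.ofReal (Real.exp (-t ^ 2 / 2)) := by
    have hb := measure_ge_le_exp_mul_mgf (X := L) (μ := μ) (t := t) t ht (hint t)
    rw [hmgf t] at hb
    rw [ENNReal.le_ofReal_iff_toReal_le (measure_ne_top μ _) (Real.exp_nonneg _)]
    refine hb.trans (le_of_eq ?_)
    rw [← Real.exp_add]
    congr 1
    ring
  have h2 : μ {x | t ≤ -L x} ≤ ENNReal.ofReal (Real.exp (-t ^ 2 / 2)) := by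
    have hb := measure_ge_le_exp_mul_mgf (X := fun x => -L x) (μ := μ) (t := t) t ht (hint' t)
    rw [hmgf' t] at hb
    rw [ENNReal.le_ofReal_iff_toReal_le (measure_ne_top μ _) (Real.exp_nonneg _)]
    refine hb.trans (le_of_eq ?_)
    rw [← Real.exp_add]
    congr 1
    ring
  have hsub : {x : ι → ℝ | t ≤ |L x|} ⊆ {x | t ≤ L x} ∪ {x | t ≤ -L x} := by
    intro x hx
    rcases abs_cases (L x) with ⟨h, _⟩ | ⟨h, _⟩
    · exact Or.inl (by simpa [h] using hx)
    · exact Or.inr (by rw [Set.mem_setOf_eq] at hx ⊢; rw [h] at hx; exact hx)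
  calc μ {x | t ≤ |L x|} ≤ μ ({x | t ≤ L x} ∪ {x | t ≤ -L x}) := measure_mono hsub
    _ ≤ μ {x | t ≤ L x} + μ {x | t ≤ -L x} := measure_union_le _ _
    _ ≤ ENNReal.ofReal (Real.exp (-t ^ 2 / 2)) + ENNReal.ofReal (Real.exp (-t ^ 2 / 2)) :=
        add_le_add h1 h2
    _ = ENNReal.ofReal (2 * Real.exp (-t ^ 2 / 2)) := by
        rw [← ENNReal.ofReal_add (Real.exp_nonneg _) (Real.exp_nonneg _)]
        congr 1
        ring
end

noncomputable section
lemma noise_to_zero (d r : ℕ)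
    (Ω : Type) [MeasurableSpace Ω] (P : Measure Ω) [IsProbabilityMeasure P]
    (W : (N : ℕ) → Ω → Tensor (d + 3) (N + 1))
    (hWmeas : ∀ N, Measurable (W N))
    (hWlaw : ∀ N, Measure.map (W N) P =
      Measure.pi fun _ : Fin (d + 3) → Fin (N + 1) => gaussianReal 0 1)
    (u : (N : ℕ) → Fin (r + 1) → Fin (N + 1) → ℝ)
    (hu : ∀ N i, u N i ⬝ᵥ u N i = 1) :
    ∀ᵐ ω ∂P, ∀ i : Fin (r + 1), Filter.Tendsto (fun N : ℕ =>
        (1 / Real.sqrt ((N : ℝ) + 1)) * ∑ f, W N ω f * tpow (u N i) f)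
      Filter.atTop (nhds 0) := by
  rw [MeasureTheory.ae_all_iff]
  intro i
  have hgmeas : ∀ N, Measurable (fun ω => ∑ f, W N ω f * tpow (u N i) f) := fun N =>
    Finset.measurable_sum _ (fun f _ => ((measurable_pi_apply f).comp (hWmeas N)).mul_const _)
  have key : ∀ k : ℕ, ∀ᵐ ω ∂P, ∀ᶠ N in Filter.atTop,
      |∑ f, W N ω f * tpow (u N i) f| < (1 / ((k : ℝ) + 1)) * Real.sqrt ((N : ℝ) + 1) := by
    intro k
    set ε : ℝ := 1 / ((k : ℝ) + 1) with hε
    have hε0 : 0 < ε := by positivity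
    set s : ℕ → Set Ω := fun N =>
      {ω | ε * Real.sqrt ((N : ℝ) + 1) ≤ |∑ f, W N ω f * tpow (u N i) f|} with hs
    have hbound : ∀ N, P (s N)
        ≤ ENNReal.ofReal (2 * Real.exp (-(ε ^ 2 / 2) * ((N : ℝ) + 1))) := by
      intro N
      have hBmeas : MeasurableSet {x : Tensor (d + 3) (N + 1) |
          ε * Real.sqrt ((N : ℝ) + 1) ≤ |∑ f, x f * tpow (u N i) f|} := by
        refine measurableSet_le measurable_const (Measurable.abs ?_)
        exact Finset.measurable_sum _ (fun f _ => (measurable_pi_apply f).mul_const _)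
      have hset : s N = (W N) ⁻¹' {x : Tensor (d + 3) (N + 1) |
          ε * Real.sqrt ((N : ℝ) + 1) ≤ |∑ f, x f * tpow (u N i) f|} := rfl
      rw [hset, ← MeasureTheory.Measure.map_apply (hWmeas N) hBmeas, hWlaw N]
      have hsq : ∑ f : Fin (d + 3) → Fin (N + 1), (tpow (u N i) f) ^ 2 = 1 := by
        have h1 : ∀ f : Fin (d + 3) → Fin (N + 1),
            (tpow (u N i) f) ^ 2 = tpow (u N i) f * tpow (u N i) f := fun f => sq (tpow (u N i) f) ▸ by ring
        rw [Finset.sum_congr rfl (fun f _ => h1 f), sum_tpow_mul_tpow, hu N i, one_pow]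
      have htail := gauss_tail (ι := Fin (d + 3) → Fin (N + 1)) (tpow (u N i)) hsq
        (ε * Real.sqrt ((N : ℝ) + 1)) (by positivity)
      refine htail.trans (le_of_eq ?_)
      congr 1
      rw [mul_pow, Real.sq_sqrt (by positivity : (0:ℝ) ≤ (N : ℝ) + 1)]
      ring_nf
    have hsummable : Summable (fun N : ℕ => 2 * Real.exp (-(ε ^ 2 / 2) * ((N : ℝ) + 1))) := by
      have hlt : Real.exp (-(ε ^ 2 / 2)) < 1 := by
        rw [Real.exp_lt_one_iff]
        have h0 : 0 < ε ^ 2 / 2 := by positivity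
        linarith
      have hgeom : Summable (fun N : ℕ => (2 * Real.exp (-(ε ^ 2 / 2))) * (Real.exp (-(ε ^ 2 / 2))) ^ N) :=
        (summable_geometric_of_lt_one (Real.exp_nonneg _) hlt).mul_left _
      refine hgeom.congr fun N => ?_
      rw [show -(ε ^ 2 / 2) * ((N : ℝ) + 1) = -(ε ^ 2 / 2) + (N : ℝ) * (-(ε ^ 2 / 2)) from by ring,
        Real.exp_add, Real.exp_nat_mul]
      ring
    have htsum : ∑' N, P (s N) ≠ ⊤ := by
      refine ne_top_of_le_ne_top ?_ (ENNReal.tsum_le_tsum hbound)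
      rw [← ENNReal.ofReal_tsum_of_nonneg (fun N => by positivity) hsummable]
      exact ENNReal.ofReal_ne_top
    filter_upwards [MeasureTheory.ae_eventually_notMem htsum] with ω hω
    filter_upwards [hω] with N hN
    exact not_le.mp hN
  filter_upwards [MeasureTheory.ae_all_iff.mpr key] with ω hω
  refine NormedAddCommGroup.tendsto_nhds_zero.mpr (fun ε hε => ?_)
  obtain ⟨k, hk⟩ := exists_nat_one_div_lt hε
  filter_upwards [hω k] with N hN
  have hsq : 0 < Real.sqrt ((N : ℝ) + 1) := Real.sqrt_pos.mpr (by positivity)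
  rw [Real.norm_eq_abs, abs_mul,
    abs_of_nonneg (by positivity : (0:ℝ) ≤ 1 / Real.sqrt ((N : ℝ) + 1))]
  calc 1 / Real.sqrt ((N : ℝ) + 1) * |∑ f, W N ω f * tpow (u N i) f|
      < 1 / Real.sqrt ((N : ℝ) + 1) * ((1 / ((k : ℝ) + 1)) * Real.sqrt ((N : ℝ) + 1)) := by
        exact mul_lt_mul_of_pos_left hN (by positivity)
    _ = 1 / ((k : ℝ) + 1) := by field_simp
    _ < ε := hk
end

/-- almost sure limit of the normalized squared error
`H_N = ‖T − Σ_i γ̂_i v̂_i^{⊗d}‖_F² − (1/N)‖X‖_F²` under Assumptions A(r) and B.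
Order is `d + 3 ≥ 3`, rank `r + 1 ≥ 1`, dimension `N + 1`. -/
theorem stmt13 (d r : ℕ)
    (Ω : Type) [MeasurableSpace Ω] (P : Measure Ω) [IsProbabilityMeasure P]
    (W : (N : ℕ) → Ω → Tensor (d + 3) (N + 1))
    (hWmeas : ∀ N, Measurable (W N))
    (hWlaw : ∀ N, Measure.map (W N) P =
      Measure.pi fun _ : Fin (d + 3) → Fin (N + 1) => ProbabilityTheory.gaussianReal 0 1)
    (β : Fin (r + 1) → ℝ) (hβ : ∀ i j : Fin (r + 1), i ≤ j → |β j| ≤ |β i|)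
    (u : (N : ℕ) → Fin (r + 1) → Fin (N + 1) → ℝ)
    (hu : ∀ N i, u N i ⬝ᵥ u N i = 1)
    (γhat : (N : ℕ) → Fin (r + 1) → Ω → ℝ)
    (vhat : (N : ℕ) → Fin (r + 1) → Ω → (Fin (N + 1) → ℝ))
    (hγmeas : ∀ N i, Measurable (γhat N i))
    (hvmeas : ∀ N i, Measurable (vhat N i))
    (hvunit : ∀ N i ω, vhat N i ω ⬝ᵥ vhat N i ω = 1)
    (hγord : ∀ N ω, ∀ i j : Fin (r + 1), i ≤ j → |γhat N j ω| ≤ |γhat N i ω|)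
    (hγne : ∀ N ω i, γhat N i ω ≠ 0)
    (hcrit : ∀ N, ∀ᵐ ω ∂P, ∀ i : Fin (r + 1),
      contractVec (m := d + 2)
        (fun f => spikedT β (u N) (symNoise (W N ω)) f
          - ∑ j, γhat N j ω * tpow (vhat N j ω) f) (vhat N i ω) = 0)
    (γ : Fin (r + 1) → ℝ) (hγ0 : ∀ i, γ i ≠ 0)
    (Rvv : Matrix (Fin (r + 1)) (Fin (r + 1)) ℝ)
    (hRvvInv : IsUnit (entryPow Rvv (d + 2)).det)
    (hAlim : ∀ᵐ ω ∂P,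
      (∀ i, Tendsto (fun N => γhat N i ω) atTop (𝓝 (γ i))) ∧
      (∀ i j, Tendsto (fun N => vhat N i ω ⬝ᵥ vhat N j ω) atTop (𝓝 (Rvv i j))))
    (Ruv : Matrix (Fin (r + 1)) (Fin (r + 1)) ℝ)
    (Ruu : Matrix (Fin (r + 1)) (Fin (r + 1)) ℝ)
    (hBuv : ∀ᵐ ω ∂P, ∀ i j : Fin (r + 1),
      Tendsto (fun N => u N i ⬝ᵥ vhat N j ω) atTop (𝓝 (Ruv i j)))
    (hBuu : ∀ i j : Fin (r + 1),
      Tendsto (fun N => u N i ⬝ᵥ u N j) atTop (𝓝 (Ruu i j))) :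
    ∀ᵐ ω ∂P,
      Tendsto (fun N : ℕ =>
          frobSq (fun f => spikedT β (u N) (symNoise (W N ω)) f
            - ∑ i, γhat N i ω * tpow (vhat N i ω) f)
          - (1 / ((N : ℝ) + 1)) * frobSq (symNoise (W N ω)))
        atTop
        (𝓝 ((∑ i, ∑ j, β i * β j * Ruu i j ^ (d + 3)) -
          ∑ i, ∑ j, γ i * γ j * Rvv i j ^ (d + 3))) := by
  have hnoise := noise_to_zero d r Ω P W hWmeas hWlaw u hu
  have hcritall : ∀ᵐ ω ∂P, ∀ N : ℕ, ∀ i : Fin (r + 1),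
      contractVec (m := d + 2)
        (fun f => spikedT β (u N) (symNoise (W N ω)) f
          - ∑ j, γhat N j ω * tpow (vhat N j ω) f) (vhat N i ω) = 0 :=
    MeasureTheory.ae_all_iff.mpr hcrit
  filter_upwards [hAlim, hnoise, hcritall] with ω hA hn hcr
  have heq : ∀ N : ℕ,
      frobSq (fun f => spikedT β (u N) (symNoise (W N ω)) f
          - ∑ i, γhat N i ω * tpow (vhat N i ω) f)
        - (1 / ((N : ℝ) + 1)) * frobSq (symNoise (W N ω))
      = ((∑ i, ∑ j, β i * β j * (u N i ⬝ᵥ u N j) ^ (d + 3))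
          - ∑ i, ∑ j, γhat N i ω * γhat N j ω * (vhat N i ω ⬝ᵥ vhat N j ω) ^ (d + 3))
        + ∑ i, 2 * β i * ((1 / Real.sqrt ((N : ℝ) + 1))
            * ∑ f, W N ω f * tpow (u N i) f) := by
    intro N
    have h := key_identity (d := d) (r := r) (N := N) β (fun i => γhat N i ω) (u N)
      (fun i => vhat N i ω) (symNoise (W N ω)) (hcr N)
    simp only [sum_symNoise_mul_tpow] at h
    exact h
  refine Filter.Tendsto.congr (fun N => (heq N).symm) ?_
  have hA1 : Tendsto (fun N => ∑ i, ∑ j, β i * β j * (u N i ⬝ᵥ u N j) ^ (d + 3)) atTop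
      (𝓝 (∑ i, ∑ j, β i * β j * Ruu i j ^ (d + 3))) := by
    refine tendsto_finset_sum _ fun i _ => tendsto_finset_sum _ fun j _ => ?_
    exact ((hBuu i j).pow (d + 3)).const_mul _
  have hB1 : Tendsto (fun N =>
      ∑ i, ∑ j, γhat N i ω * γhat N j ω * (vhat N i ω ⬝ᵥ vhat N j ω) ^ (d + 3)) atTop
      (𝓝 (∑ i, ∑ j, γ i * γ j * Rvv i j ^ (d + 3))) := by
    refine tendsto_finset_sum _ fun i _ => tendsto_finset_sum _ fun j _ => ?_
    exact ((hA.1 i).mul (hA.1 j)).mul ((hA.2 i j).pow (d + 3))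
  have hC1 : Tendsto (fun N : ℕ => ∑ i, 2 * β i * ((1 / Real.sqrt ((N : ℝ) + 1))
      * ∑ f, W N ω f * tpow (u N i) f)) atTop (𝓝 0) := by
    have h0 : Tendsto (fun N : ℕ => ∑ i, 2 * β i * ((1 / Real.sqrt ((N : ℝ) + 1))
        * ∑ f, W N ω f * tpow (u N i) f)) atTop (𝓝 (∑ _i : Fin (r + 1), 2 * β _i * 0)) :=
      tendsto_finset_sum _ fun i _ => (hn i).const_mul (2 * β i)
    simpa using h0
  have hfin := (hA1.sub hB1).add hC1
  simpa using hfin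


end
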